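/- Let S be a real normed space, υ a unit vector in S, L_υ the line generated by υ, and f a supporting functional for υ (i.e., f is a bounded linear functional with |f(x)| ≤ ‖x‖ for all x and f(υ) = 1). If x, y ∈ S are each at distance at most 1/8 from L_υ and ‖x - y‖ ≥ 1, then |f(x) - f(y)| ≥ 1/2. -/
import Mathlib


theorem supporting_functional_separation
    {S : Type*} [NormedAddCommGroup S] [NormedSpace ℝ S]
    (υ : S) (hυ : ‖υ‖ = 1)
    (f : S →L[ℝ] ℝ) (hf : ∀ x : S, |f x| ≤ ‖x‖) (hfυ : f υ = 1)
    (L : Set S) (hL : L = Set.range (fun t : ℝ => t • υ))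
    (x y : S)
    (hx : Metric.infDist x L ≤ 1 / 8)
    (hy : Metric.infDist y L ≤ 1 / 8)
    (hxy : 1 ≤ ‖x - y‖) :
    (1 : ℝ) / 2 ≤ |f x - f y| := by
  have hLne : L.Nonempty := by
    rw [hL]; exact ⟨υ, 1, one_smul ℝ υ⟩
  refine le_of_forall_pos_le_add fun ε hε => ?_
  have hε4 : 0 < ε / 4 := by linarith
  obtain ⟨p, hpL, hpd⟩ := Metric.infDist_lt_iff hLne |>.mp
    (lt_of_le_of_lt hx (by linarith : (1:ℝ)/8 < 1/8 + ε/4))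
  obtain ⟨q, hqL, hqd⟩ := Metric.infDist_lt_iff hLne |>.mp
    (lt_of_le_of_lt hy (by linarith : (1:ℝ)/8 < 1/8 + ε/4))
  rw [hL] at hpL hqL
  obtain ⟨a, rfl⟩ := hpL
  obtain ⟨b, rfl⟩ := hqL
  simp only [dist_eq_norm] at hpd hqd
  have hfa : |f x - a| ≤ ‖x - a • υ‖ := by
    have := hf (x - a • υ)
    simpa [map_sub, map_smul, hfυ, smul_eq_mul] using this
  have hfb : |f y - b| ≤ ‖y - b • υ‖ := by
    have := hf (y - b • υ)
    simpa [map_sub, map_smul, hfυ, smul_eq_mul] using this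
  have hab : ‖a • υ - b • υ‖ = |a - b| := by
    rw [← sub_smul, norm_smul, hυ, mul_one, Real.norm_eq_abs]
  have h1 : |a - b| ≥ 1 - (1/8 + ε/4) - (1/8 + ε/4) := by
    have : ‖x - y‖ ≤ ‖x - a • υ‖ + ‖a • υ - b • υ‖ + ‖b • υ - y‖ := by
      have := norm_sub_le_norm_sub_add_norm_sub x (a • υ) y
      have h2 := norm_sub_le_norm_sub_add_norm_sub (a • υ) (b • υ) y
      linarith
    have hby : ‖b • υ - y‖ = ‖y - b • υ‖ := norm_sub_rev _ _
    rw [hab, hby] at this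
    linarith
  have h2 : |a - b| ≤ |f x - f y| + |f x - a| + |f y - b| := by
    have : a - b = -(f x - a) + (f x - f y) + (f y - b) := by ring
    rw [this]
    calc |(-(f x - a) + (f x - f y) + (f y - b))|
        ≤ |(-(f x - a) + (f x - f y))| + |f y - b| := abs_add_le _ _
      _ ≤ |(-(f x - a))| + |f x - f y| + |f y - b| := by
          have := abs_add_le (-(f x - a)) (f x - f y); linarith
      _ = |f x - f y| + |f x - a| + |f y - b| := by rw [abs_neg]; ring
  linarith
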